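/- (One-dimensional case with optimal constant) Whenever $E_+$ and $E_-$ are disjoint measurable subsets of $[0,1]$ satisfying $\min\{\lambda(E_+), \lambda(E_-)\} > \frac{1}{2} \lambda([0,1] \setminus E_+ \setminus E_-)$, there exists a closed subinterval $W \subseteq [0,1]$ of positive length with $\min\{\lambda(W \cap E_+), \lambda(W \cap E_-)\} \ge \frac{1}{4} \lambda(W)$. -/

import Mathlib

open MeasureTheory Set

namespace Stmt13

lemma vol_inter_ne_top {X : Set ℝ} (hXI : X ⊆ Icc (0:ℝ) 1) (S : Set ℝ) :
    volume (X ∩ S) ≠ ⊤ := by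
  have h1 : volume (X ∩ S) ≤ volume (Icc (0:ℝ) 1) :=
    measure_mono (fun x hx => hXI hx.1)
  rw [Real.volume_Icc] at h1
  exact ne_top_of_le_ne_top (by simp) h1

noncomputable def gg (X : Set ℝ) (x : ℝ) : ℝ := (volume (X ∩ Iic x)).toReal

lemma gg_nonneg (X : Set ℝ) (x : ℝ) : 0 ≤ gg X x := ENNReal.toReal_nonneg

lemma gg_mono {X : Set ℝ} (hXI : X ⊆ Icc (0:ℝ) 1) : Monotone (gg X) := by
  intro a b hab
  exact ENNReal.toReal_mono (vol_inter_ne_top hXI _)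
    (measure_mono (inter_subset_inter_right _ (Iic_subset_Iic.2 hab)))

lemma gg_diff {X : Set ℝ} (hX : MeasurableSet X) (hXI : X ⊆ Icc (0:ℝ) 1)
    {a b : ℝ} (hab : a ≤ b) :
    gg X b - gg X a = (volume (X ∩ Ioc a b)).toReal := by
  have hsplit : X ∩ Iic b = (X ∩ Iic a) ∪ (X ∩ Ioc a b) := by
    rw [← inter_union_distrib_left, Iic_union_Ioc_eq_Iic hab]
  have hdisj : Disjoint (X ∩ Iic a) (X ∩ Ioc a b) := by
    apply Disjoint.mono inter_subset_right inter_subset_right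
    rw [disjoint_left]
    intro x hx hx'
    exact absurd hx (not_le.2 hx'.1)
  have hm := measure_union (μ := volume) hdisj (hX.inter measurableSet_Ioc)
  rw [← hsplit] at hm
  rw [gg, gg, hm, ENNReal.toReal_add (vol_inter_ne_top hXI _) (vol_inter_ne_top hXI _)]
  ring

lemma gg_zero {X : Set ℝ} (hXI : X ⊆ Icc (0:ℝ) 1) : gg X 0 = 0 := by
  have hsub : X ∩ Iic 0 ⊆ {0} := by
    intro x hx
    have h1 := hXI hx.1
    have h2 : x ≤ 0 := hx.2
    exact le_antisymm h2 h1.1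
  have h0 : volume (X ∩ Iic 0) = 0 :=
    le_antisymm (le_trans (measure_mono hsub) (by simp)) zero_le
  simp [gg, h0]

lemma gg_of_nonpos {X : Set ℝ} (hXI : X ⊆ Icc (0:ℝ) 1) {x : ℝ} (hx : x ≤ 0) : gg X x = 0 :=
  le_antisymm (by simpa [gg_zero hXI] using gg_mono hXI hx) (gg_nonneg X x)

lemma gg_one {X : Set ℝ} (hXI : X ⊆ Icc (0:ℝ) 1) : gg X 1 = (volume X).toReal := by
  have h1 : X ∩ Iic 1 = X := inter_eq_left.2 (fun x hx => (hXI hx).2)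
  rw [gg, h1]

lemma gg_incr_nonneg {X : Set ℝ} (hXI : X ⊆ Icc (0:ℝ) 1) {a b : ℝ} (hab : a ≤ b) :
    0 ≤ gg X b - gg X a := sub_nonneg.2 (gg_mono hXI hab)

lemma gg_incr_le {X : Set ℝ} (hX : MeasurableSet X) (hXI : X ⊆ Icc (0:ℝ) 1)
    {a b : ℝ} (hab : a ≤ b) : gg X b - gg X a ≤ b - a := by
  rw [gg_diff hX hXI hab]
  have h1 : volume (X ∩ Ioc a b) ≤ volume (Ioc a b) := measure_mono inter_subset_right
  rw [Real.volume_Ioc] at h1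
  calc (volume (X ∩ Ioc a b)).toReal ≤ (ENNReal.ofReal (b - a)).toReal :=
        ENNReal.toReal_mono (by simp) h1
    _ ≤ b - a := by rw [ENNReal.toReal_ofReal (by linarith : (0:ℝ) ≤ b - a)]

lemma gg_sum_incr_le {X Y : Set ℝ} (hX : MeasurableSet X) (hY : MeasurableSet Y)
    (hXI : X ⊆ Icc (0:ℝ) 1) (hYI : Y ⊆ Icc (0:ℝ) 1) (hd : Disjoint X Y)
    {a b : ℝ} (hab : a ≤ b) :
    (gg X b - gg X a) + (gg Y b - gg Y a) ≤ b - a := by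
  rw [gg_diff hX hXI hab, gg_diff hY hYI hab]
  have hdisj : Disjoint (X ∩ Ioc a b) (Y ∩ Ioc a b) :=
    Disjoint.mono inter_subset_left inter_subset_left hd
  have hunion := measure_union (μ := volume) hdisj (hY.inter measurableSet_Ioc)
  rw [← union_inter_distrib_right] at hunion
  have hle : volume ((X ∪ Y) ∩ Ioc a b) ≤ ENNReal.ofReal (b - a) := by
    rw [← Real.volume_Ioc]; exact measure_mono inter_subset_right
  rw [← ENNReal.toReal_add (vol_inter_ne_top hXI _) (vol_inter_ne_top hYI _), ← hunion]
  calc (volume ((X ∪ Y) ∩ Ioc a b)).toReal ≤ (ENNReal.ofReal (b-a)).toReal :=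
        ENNReal.toReal_mono (by simp) hle
    _ ≤ b - a := by rw [ENNReal.toReal_ofReal (by linarith : (0:ℝ) ≤ b - a)]

lemma gg_cont {X : Set ℝ} (hX : MeasurableSet X) (hXI : X ⊆ Icc (0:ℝ) 1) :
    Continuous (gg X) := by
  rw [Metric.continuous_iff]
  intro b ε hε
  refine ⟨ε, hε, fun a hab => ?_⟩
  rw [Real.dist_eq] at hab ⊢
  rcases le_total a b with h | h
  · have h1 := gg_incr_nonneg hXI h
    have h2 := gg_incr_le hX hXI h
    rw [abs_lt] at hab ⊢
    constructor <;> [linarith [hab.1]; linarith [hab.2]]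
  · have h1 := gg_incr_nonneg hXI h
    have h2 := gg_incr_le hX hXI h
    rw [abs_lt] at hab ⊢
    constructor <;> [linarith [hab.1]; linarith [hab.2]]

/-! ### The functions d, M and the set K -/

noncomputable def dd (X Y : Set ℝ) (x : ℝ) : ℝ := gg X x - gg Y x

lemma dd_cont {X Y : Set ℝ} (hX : MeasurableSet X) (hY : MeasurableSet Y)
    (hXI : X ⊆ Icc (0:ℝ) 1) (hYI : Y ⊆ Icc (0:ℝ) 1) : Continuous (dd X Y) :=
  (gg_cont hX hXI).sub (gg_cont hY hYI)

lemma dd_zero {X Y : Set ℝ} (hXI : X ⊆ Icc (0:ℝ) 1) (hYI : Y ⊆ Icc (0:ℝ) 1) :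
    dd X Y 0 = 0 := by simp [dd, gg_zero hXI, gg_zero hYI]

lemma dd_of_nonpos {X Y : Set ℝ} (hXI : X ⊆ Icc (0:ℝ) 1) (hYI : Y ⊆ Icc (0:ℝ) 1)
    {x : ℝ} (hx : x ≤ 0) : dd X Y x = 0 := by
  simp [dd, gg_of_nonpos hXI hx, gg_of_nonpos hYI hx]

lemma dd_incr_le {X Y : Set ℝ} (hX : MeasurableSet X)
    (hXI : X ⊆ Icc (0:ℝ) 1) (hYI : Y ⊆ Icc (0:ℝ) 1)
    {a b : ℝ} (hab : a ≤ b) : dd X Y b - dd X Y a ≤ b - a := by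
  have h1 := gg_incr_le hX hXI hab
  have h2 := gg_incr_nonneg hYI hab
  simp only [dd]; linarith

noncomputable def tT (X Y : Set ℝ) : ℝ :=
  sInf {t | t ∈ Icc (0:ℝ) 1 ∧ dd X Y t = dd X Y 1}

lemma tT_mem {X Y : Set ℝ} (hX : MeasurableSet X) (hY : MeasurableSet Y)
    (hXI : X ⊆ Icc (0:ℝ) 1) (hYI : Y ⊆ Icc (0:ℝ) 1) :
    tT X Y ∈ Icc (0:ℝ) 1 ∧ dd X Y (tT X Y) = dd X Y 1 := by
  have hclosed : IsClosed {t | t ∈ Icc (0:ℝ) 1 ∧ dd X Y t = dd X Y 1} := by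
    have h1 : IsClosed {t : ℝ | dd X Y t = dd X Y 1} :=
      isClosed_eq (dd_cont hX hY hXI hYI) continuous_const
    exact isClosed_Icc.inter h1
  have hne : (1:ℝ) ∈ {t | t ∈ Icc (0:ℝ) 1 ∧ dd X Y t = dd X Y 1} := by
    simp [mem_setOf_eq]
  have hbdd : BddBelow {t | t ∈ Icc (0:ℝ) 1 ∧ dd X Y t = dd X Y 1} :=
    ⟨0, fun t ht => ht.1.1⟩
  exact hclosed.csInf_mem ⟨1, hne⟩ hbdd

lemma tT_le {X Y : Set ℝ} {s : ℝ} (hs : s ∈ Icc (0:ℝ) 1) (h : dd X Y s = dd X Y 1) :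
    tT X Y ≤ s := csInf_le ⟨0, fun t ht => ht.1.1⟩ ⟨hs, h⟩

lemma dd_lt_of_lt_tT {X Y : Set ℝ} (hX : MeasurableSet X) (hY : MeasurableSet Y)
    (hXI : X ⊆ Icc (0:ℝ) 1) (hYI : Y ⊆ Icc (0:ℝ) 1) (hle : 0 ≤ dd X Y 1)
    {s : ℝ} (h0 : 0 ≤ s) (hs : s < tT X Y) : dd X Y s < dd X Y 1 := by
  have hT := tT_mem hX hY hXI hYI
  have hs1 : s ≤ 1 := le_trans hs.le hT.1.2
  rcases lt_trichotomy (dd X Y s) (dd X Y 1) with h | h | h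
  · exact h
  · exact absurd (tT_le ⟨h0, hs1⟩ h) (not_le.2 hs)
  · -- IVT on [0, s]
    have hIVT := intermediate_value_Icc h0 ((dd_cont hX hY hXI hYI).continuousOn)
    have hmem : dd X Y 1 ∈ Icc (dd X Y 0) (dd X Y s) := by
      rw [dd_zero hXI hYI]; exact ⟨hle, h.le⟩
    obtain ⟨c, hc, hcd⟩ := hIVT hmem
    have : tT X Y ≤ c := tT_le ⟨hc.1, le_trans hc.2 hs1⟩ hcd
    linarith [hc.2]

lemma dd_le_dd1 {X Y : Set ℝ} (hX : MeasurableSet X) (hY : MeasurableSet Y)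
    (hXI : X ⊆ Icc (0:ℝ) 1) (hYI : Y ⊆ Icc (0:ℝ) 1) (hle : 0 ≤ dd X Y 1)
    {s : ℝ} (hs : s ∈ Icc 0 (tT X Y)) : dd X Y s ≤ dd X Y 1 := by
  rcases lt_or_eq_of_le hs.2 with h | h
  · exact (dd_lt_of_lt_tT hX hY hXI hYI hle hs.1 h).le
  · rw [h, (tT_mem hX hY hXI hYI).2]

noncomputable def MM (X Y : Set ℝ) (t : ℝ) : ℝ :=
  sSup (dd X Y '' Icc 0 (min (max t 0) (tT X Y)))

lemma tT_nonneg {X Y : Set ℝ} (hX : MeasurableSet X) (hY : MeasurableSet Y)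
    (hXI : X ⊆ Icc (0:ℝ) 1) (hYI : Y ⊆ Icc (0:ℝ) 1) : 0 ≤ tT X Y :=
  (tT_mem hX hY hXI hYI).1.1

lemma cc_nonneg {X Y : Set ℝ} (hX : MeasurableSet X) (hY : MeasurableSet Y)
    (hXI : X ⊆ Icc (0:ℝ) 1) (hYI : Y ⊆ Icc (0:ℝ) 1) (t : ℝ) :
    0 ≤ min (max t 0) (tT X Y) :=
  le_min (le_max_right t 0) (tT_nonneg hX hY hXI hYI)

lemma MM_bdd {X Y : Set ℝ} (hX : MeasurableSet X) (hY : MeasurableSet Y)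
    (hXI : X ⊆ Icc (0:ℝ) 1) (hYI : Y ⊆ Icc (0:ℝ) 1) (c : ℝ) :
    BddAbove (dd X Y '' Icc 0 c) :=
  (isCompact_Icc.image (dd_cont hX hY hXI hYI)).bddAbove

lemma le_MM {X Y : Set ℝ} (hX : MeasurableSet X) (hY : MeasurableSet Y)
    (hXI : X ⊆ Icc (0:ℝ) 1) (hYI : Y ⊆ Icc (0:ℝ) 1) {t s : ℝ}
    (hs : s ∈ Icc 0 (min (max t 0) (tT X Y))) : dd X Y s ≤ MM X Y t :=
  le_csSup (MM_bdd hX hY hXI hYI _) (mem_image_of_mem _ hs)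

lemma MM_le {X Y : Set ℝ} (hX : MeasurableSet X) (hY : MeasurableSet Y)
    (hXI : X ⊆ Icc (0:ℝ) 1) (hYI : Y ⊆ Icc (0:ℝ) 1) {t B : ℝ}
    (h : ∀ s ∈ Icc 0 (min (max t 0) (tT X Y)), dd X Y s ≤ B) : MM X Y t ≤ B := by
  apply csSup_le
  · exact ⟨dd X Y 0, mem_image_of_mem _ ⟨le_refl 0, cc_nonneg hX hY hXI hYI t⟩⟩
  · rintro x ⟨s, hs, rfl⟩; exact h s hs

lemma MM_nonneg {X Y : Set ℝ} (hX : MeasurableSet X) (hY : MeasurableSet Y)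
    (hXI : X ⊆ Icc (0:ℝ) 1) (hYI : Y ⊆ Icc (0:ℝ) 1) (t : ℝ) : 0 ≤ MM X Y t := by
  have := le_MM hX hY hXI hYI (t := t) (s := 0) ⟨le_refl 0, cc_nonneg hX hY hXI hYI t⟩
  rwa [dd_zero hXI hYI] at this

lemma dd_le_MM {X Y : Set ℝ} (hX : MeasurableSet X) (hY : MeasurableSet Y)
    (hXI : X ⊆ Icc (0:ℝ) 1) (hYI : Y ⊆ Icc (0:ℝ) 1) {t : ℝ} (ht : t ≤ tT X Y) :
    dd X Y t ≤ MM X Y t := by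
  rcases le_total t 0 with h | h
  · rw [dd_of_nonpos hXI hYI h]; exact MM_nonneg hX hY hXI hYI t
  · exact le_MM hX hY hXI hYI ⟨h, le_min (by simp [h]) ht⟩

lemma MM_mono {X Y : Set ℝ} (hX : MeasurableSet X) (hY : MeasurableSet Y)
    (hXI : X ⊆ Icc (0:ℝ) 1) (hYI : Y ⊆ Icc (0:ℝ) 1) : Monotone (MM X Y) := by
  intro a b hab
  apply MM_le hX hY hXI hYI
  intro s hs
  apply le_MM hX hY hXI hYI
  refine ⟨hs.1, le_trans hs.2 ?_⟩
  exact min_le_min (max_le_max hab (le_refl 0)) (le_refl _)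

lemma MM_lip {X Y : Set ℝ} (hX : MeasurableSet X) (hY : MeasurableSet Y)
    (hXI : X ⊆ Icc (0:ℝ) 1) (hYI : Y ⊆ Icc (0:ℝ) 1) {a b : ℝ} (hab : a ≤ b) :
    MM X Y b ≤ MM X Y a + (b - a) := by
  set ca := min (max a 0) (tT X Y) with hca
  set cb := min (max b 0) (tT X Y) with hcb
  have hcc : cb - ca ≤ b - a := by
    have hba : (0:ℝ) ≤ b - a := by linarith
    have h1 : max b 0 ≤ max a 0 + (b - a) :=
      max_le (by linarith [le_max_left a 0]) (by linarith [le_max_right a 0])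
    have h2 : cb ≤ min (max a 0 + (b-a)) (tT X Y + (b-a)) := min_le_min h1 (by linarith)
    rw [min_add_add_right] at h2
    simp only [hca]
    linarith
  have hcac : 0 ≤ ca := cc_nonneg hX hY hXI hYI a
  apply MM_le hX hY hXI hYI
  intro s hs
  rcases le_total s ca with h | h
  · have := le_MM hX hY hXI hYI (t := a) (s := s) ⟨hs.1, h⟩
    have hba : 0 ≤ b - a := by linarith
    linarith
  · have h1 : dd X Y s - dd X Y ca ≤ s - ca := dd_incr_le hX hXI hYI h
    have h2 : dd X Y ca ≤ MM X Y a :=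
      le_MM hX hY hXI hYI ⟨hcac, le_refl _⟩
    have h3 : s ≤ cb := hs.2
    linarith

lemma MM_cont {X Y : Set ℝ} (hX : MeasurableSet X) (hY : MeasurableSet Y)
    (hXI : X ⊆ Icc (0:ℝ) 1) (hYI : Y ⊆ Icc (0:ℝ) 1) : Continuous (MM X Y) := by
  rw [Metric.continuous_iff]
  intro b ε hε
  refine ⟨ε, hε, fun a hab => ?_⟩
  rw [Real.dist_eq] at hab ⊢
  rcases le_total a b with h | h
  · have h1 := MM_mono hX hY hXI hYI h
    have h2 := MM_lip hX hY hXI hYI h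
    rw [abs_lt] at hab ⊢
    constructor <;> [linarith [hab.1]; linarith [hab.2]]
  · have h1 := MM_mono hX hY hXI hYI h
    have h2 := MM_lip hX hY hXI hYI h
    rw [abs_lt] at hab ⊢
    constructor <;> [linarith [hab.1]; linarith [hab.2]]

lemma MM_of_nonpos {X Y : Set ℝ} (hX : MeasurableSet X) (hY : MeasurableSet Y)
    (hXI : X ⊆ Icc (0:ℝ) 1) (hYI : Y ⊆ Icc (0:ℝ) 1) {t : ℝ} (ht : t ≤ 0) :
    MM X Y t = 0 := by
  have hc : min (max t 0) (tT X Y) = 0 := by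
    rw [max_eq_right ht, min_eq_left (tT_nonneg hX hY hXI hYI)]
  rw [MM, hc, Icc_self, image_singleton, csSup_singleton, dd_zero hXI hYI]

lemma MM_le_dd1 {X Y : Set ℝ} (hX : MeasurableSet X) (hY : MeasurableSet Y)
    (hXI : X ⊆ Icc (0:ℝ) 1) (hYI : Y ⊆ Icc (0:ℝ) 1) (hle : 0 ≤ dd X Y 1) (t : ℝ) :
    MM X Y t ≤ dd X Y 1 := by
  apply MM_le hX hY hXI hYI
  intro s hs
  exact dd_le_dd1 hX hY hXI hYI hle ⟨hs.1, le_trans hs.2 (min_le_right _ _)⟩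

lemma MM_tT {X Y : Set ℝ} (hX : MeasurableSet X) (hY : MeasurableSet Y)
    (hXI : X ⊆ Icc (0:ℝ) 1) (hYI : Y ⊆ Icc (0:ℝ) 1) (hle : 0 ≤ dd X Y 1) :
    MM X Y (tT X Y) = dd X Y 1 := by
  refine le_antisymm (MM_le_dd1 hX hY hXI hYI hle _) ?_
  have h1 := dd_le_MM hX hY hXI hYI (le_refl (tT X Y))
  rwa [(tT_mem hX hY hXI hYI).2] at h1

def KK (X Y : Set ℝ) : Set ℝ := {t | t ∈ Icc 0 (tT X Y) ∧ dd X Y t = MM X Y t}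

lemma KK_closed {X Y : Set ℝ} (hX : MeasurableSet X) (hY : MeasurableSet Y)
    (hXI : X ⊆ Icc (0:ℝ) 1) (hYI : Y ⊆ Icc (0:ℝ) 1) : IsClosed (KK X Y) := by
  have h1 : IsClosed {t : ℝ | dd X Y t = MM X Y t} :=
    isClosed_eq (dd_cont hX hY hXI hYI) (MM_cont hX hY hXI hYI)
  exact isClosed_Icc.inter h1

lemma zero_mem_KK {X Y : Set ℝ} (hX : MeasurableSet X) (hY : MeasurableSet Y)
    (hXI : X ⊆ Icc (0:ℝ) 1) (hYI : Y ⊆ Icc (0:ℝ) 1) : (0:ℝ) ∈ KK X Y :=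
  ⟨⟨le_refl 0, tT_nonneg hX hY hXI hYI⟩, by
    rw [dd_zero hXI hYI, MM_of_nonpos hX hY hXI hYI (le_refl 0)]⟩

lemma tT_mem_KK {X Y : Set ℝ} (hX : MeasurableSet X) (hY : MeasurableSet Y)
    (hXI : X ⊆ Icc (0:ℝ) 1) (hYI : Y ⊆ Icc (0:ℝ) 1) (hle : 0 ≤ dd X Y 1) :
    tT X Y ∈ KK X Y :=
  ⟨⟨tT_nonneg hX hY hXI hYI, le_refl _⟩, by
    rw [(tT_mem hX hY hXI hYI).2, MM_tT hX hY hXI hYI hle]⟩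

lemma dd_le_of_KK {X Y : Set ℝ} (hX : MeasurableSet X) (hY : MeasurableSet Y)
    (hXI : X ⊆ Icc (0:ℝ) 1) (hYI : Y ⊆ Icc (0:ℝ) 1) {x s : ℝ}
    (hx : x ∈ KK X Y) (hs : s ≤ x) : dd X Y s ≤ dd X Y x := by
  have h1 : dd X Y s ≤ MM X Y s := dd_le_MM hX hY hXI hYI (le_trans hs hx.1.2)
  have h2 : MM X Y s ≤ MM X Y x := MM_mono hX hY hXI hYI hs
  rw [hx.2]; linarith

/-! ### Badness and the cone condition -/

def Bad (X Y : Set ℝ) : Prop :=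
  ∀ a b : ℝ, 0 ≤ a → a < b → b ≤ 1 →
    (volume (X ∩ Ioc a b)).toReal < (b-a)/4 ∨ (volume (Y ∩ Ioc a b)).toReal < (b-a)/4

lemma cone {X Y : Set ℝ} (hX : MeasurableSet X) (hY : MeasurableSet Y)
    (hXI : X ⊆ Icc (0:ℝ) 1) (hYI : Y ⊆ Icc (0:ℝ) 1) (hbad : Bad X Y)
    {a b : ℝ} (h0 : 0 ≤ a) (hab : a ≤ b) (h1 : b ≤ 1) :
    (gg X b - gg X a) + (gg Y b - gg Y a) - (b-a)/2 ≤ |dd X Y b - dd X Y a| := by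
  rcases eq_or_lt_of_le hab with rfl | hlt
  · simp
  rcases hbad a b h0 hlt h1 with h | h
  · rw [← gg_diff hX hXI hab] at h
    have habs : dd X Y a - dd X Y b ≤ |dd X Y b - dd X Y a| := by
      rw [abs_sub_comm]; exact le_abs_self _
    simp only [dd] at habs ⊢; linarith
  · rw [← gg_diff hY hYI hab] at h
    have habs : dd X Y b - dd X Y a ≤ |dd X Y b - dd X Y a| := le_abs_self _
    simp only [dd] at habs ⊢; linarith

/-! ### On a gap of K, the function d returns to its starting value -/

lemma gap_dd_eq {X Y : Set ℝ} (hX : MeasurableSet X) (hY : MeasurableSet Y)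
    (hXI : X ⊆ Icc (0:ℝ) 1) (hYI : Y ⊆ Icc (0:ℝ) 1) {a b : ℝ}
    (ha : a ∈ KK X Y) (hb : b ∈ KK X Y) (hab : a < b)
    (hgap : Ioo a b ∩ KK X Y = ∅) : dd X Y b = dd X Y a := by
  have step1 : ∀ σ ∈ Ioo a b, dd X Y σ ≤ MM X Y a := by
    intro σ hσ
    by_contra hc
    push_neg at hc
    set v := dd X Y σ with hv
    set R := {t | t ∈ Icc a σ ∧ v ≤ dd X Y t} with hR
    have hRclosed : IsClosed R :=
      isClosed_Icc.inter (isClosed_le continuous_const (dd_cont hX hY hXI hYI))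
    have hRne : σ ∈ R := ⟨⟨hσ.1.le, le_refl σ⟩, le_refl v⟩
    have hbddR : BddBelow R := ⟨a, fun t ht => ht.1.1⟩
    set ρ := sInf R with hρ
    have hρR : ρ ∈ R := hRclosed.csInf_mem ⟨σ, hRne⟩ hbddR
    have hρa : a ≤ ρ := hρR.1.1
    have hρσ : ρ ≤ σ := hρR.1.2
    have hρne : a < ρ := by
      rcases eq_or_lt_of_le hρa with h | h
      · exfalso
        have hthis := hρR.2
        rw [← h, ha.2] at hthis
        linarith
      · exact h
    have hub : ∀ s ∈ Icc 0 (min (max ρ 0) (tT X Y)), dd X Y s ≤ dd X Y ρ := by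
      intro s hs
      have h0ρ : 0 ≤ ρ := le_trans ha.1.1 hρa
      have hρT : ρ ≤ tT X Y := le_trans hρσ (le_trans hσ.2.le hb.1.2)
      have hcρ : min (max ρ 0) (tT X Y) = ρ := by
        rw [max_eq_left h0ρ, min_eq_left hρT]
      rw [hcρ] at hs
      rcases le_total s a with h | h
      · have h1 : dd X Y s ≤ dd X Y a := dd_le_of_KK hX hY hXI hYI ha h
        rw [ha.2] at h1
        linarith [hρR.2]
      · rcases eq_or_lt_of_le hs.2 with h2 | h2
        · rw [h2]
        · have hns : s ∉ R := fun hmem => absurd (csInf_le hbddR hmem) (not_le.2 h2)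
          have hlt : ¬ (v ≤ dd X Y s) := fun hvs => hns ⟨⟨h, le_trans h2.le hρσ⟩, hvs⟩
          push_neg at hlt
          linarith [hρR.2]
    have hMMρ : MM X Y ρ ≤ dd X Y ρ := MM_le hX hY hXI hYI hub
    have hρKK : ρ ∈ KK X Y :=
      ⟨⟨le_trans ha.1.1 hρa, le_trans hρσ (le_trans hσ.2.le hb.1.2)⟩,
        le_antisymm (dd_le_MM hX hY hXI hYI (le_trans hρσ (le_trans hσ.2.le hb.1.2))) hMMρ⟩
    have hmem : ρ ∈ Ioo a b ∩ KK X Y := ⟨⟨hρne, lt_of_le_of_lt hρσ hσ.2⟩, hρKK⟩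
    rw [hgap] at hmem
    exact hmem
  have step2 : dd X Y b ≤ MM X Y a := by
    have hclosed : IsClosed {t : ℝ | dd X Y t ≤ MM X Y a} :=
      isClosed_le (dd_cont hX hY hXI hYI) continuous_const
    have hsub : closure (Ioo a b) ⊆ {t : ℝ | dd X Y t ≤ MM X Y a} :=
      closure_minimal step1 hclosed
    have hbmem : b ∈ closure (Ioo a b) := by
      rw [closure_Ioo (ne_of_lt hab)]
      exact ⟨hab.le, le_refl b⟩
    exact hsub hbmem
  have h1 : dd X Y a ≤ dd X Y b := dd_le_of_KK hX hY hXI hYI hb hab.le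
  refine le_antisymm ?_ h1
  rw [ha.2]
  exact step2

/-! ### Gap intervals -/

noncomputable def gapL (X Y : Set ℝ) (x : ℝ) : ℝ := sSup (KK X Y ∩ Iic x)
noncomputable def gapR (X Y : Set ℝ) (x : ℝ) : ℝ := sInf (KK X Y ∩ Ici x)

section Gaps

variable {X Y : Set ℝ}

lemma gapL_mem (hX : MeasurableSet X) (hY : MeasurableSet Y)
    (hXI : X ⊆ Icc (0:ℝ) 1) (hYI : Y ⊆ Icc (0:ℝ) 1) {x : ℝ}
    (hx : x ∈ Icc 0 (tT X Y)) : gapL X Y x ∈ KK X Y ∩ Iic x := by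
  show sSup (KK X Y ∩ Iic x) ∈ KK X Y ∩ Iic x
  apply ((KK_closed hX hY hXI hYI).inter isClosed_Iic).csSup_mem
  · exact ⟨0, zero_mem_KK hX hY hXI hYI, hx.1⟩
  · exact ⟨x, fun t ht => ht.2⟩

lemma gapR_mem (hX : MeasurableSet X) (hY : MeasurableSet Y)
    (hXI : X ⊆ Icc (0:ℝ) 1) (hYI : Y ⊆ Icc (0:ℝ) 1) (hle : 0 ≤ dd X Y 1) {x : ℝ}
    (hx : x ∈ Icc 0 (tT X Y)) : gapR X Y x ∈ KK X Y ∩ Ici x := by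
  show sInf (KK X Y ∩ Ici x) ∈ KK X Y ∩ Ici x
  apply ((KK_closed hX hY hXI hYI).inter isClosed_Ici).csInf_mem
  · exact ⟨tT X Y, tT_mem_KK hX hY hXI hYI hle, hx.2⟩
  · exact ⟨x, fun t ht => ht.2⟩

lemma gap_Ioo_inter (hX : MeasurableSet X) (hY : MeasurableSet Y)
    (hXI : X ⊆ Icc (0:ℝ) 1) (hYI : Y ⊆ Icc (0:ℝ) 1) {x : ℝ}
    (hx : x ∈ Icc 0 (tT X Y)) :
    Ioo (gapL X Y x) (gapR X Y x) ∩ KK X Y = ∅ := by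
  ext k
  simp only [mem_inter_iff, mem_Ioo, mem_empty_iff_false, iff_false, not_and, and_imp]
  intro h1 h2 hk
  rcases le_total k x with h | h
  · exact absurd (le_csSup (s := KK X Y ∩ Iic x) ⟨x, fun t ht => ht.2⟩ ⟨hk, h⟩) (not_le.2 h1)
  · exact absurd (csInf_le (s := KK X Y ∩ Ici x) ⟨x, fun t ht => ht.2⟩ ⟨hk, h⟩) (not_le.2 h2)

lemma mem_gap (hX : MeasurableSet X) (hY : MeasurableSet Y)
    (hXI : X ⊆ Icc (0:ℝ) 1) (hYI : Y ⊆ Icc (0:ℝ) 1) (hle : 0 ≤ dd X Y 1) {x : ℝ}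
    (hx : x ∈ Icc 0 (tT X Y) \ KK X Y) :
    x ∈ Ioo (gapL X Y x) (gapR X Y x) := by
  have hL := gapL_mem hX hY hXI hYI hx.1
  have hR := gapR_mem hX hY hXI hYI hle hx.1
  constructor
  · rcases eq_or_lt_of_le (mem_Iic.mp hL.2) with h | h
    · exact absurd (h ▸ hL.1) hx.2
    · exact h
  · rcases eq_or_lt_of_le (mem_Ici.mp hR.2) with h | h
    · exact absurd (h ▸ hR.1) hx.2
    · exact h

lemma gap_subset (hX : MeasurableSet X) (hY : MeasurableSet Y)
    (hXI : X ⊆ Icc (0:ℝ) 1) (hYI : Y ⊆ Icc (0:ℝ) 1) (hle : 0 ≤ dd X Y 1) {x : ℝ}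
    (hx : x ∈ Icc 0 (tT X Y)) :
    Ioo (gapL X Y x) (gapR X Y x) ⊆ Icc 0 (tT X Y) \ KK X Y := by
  intro t ht
  have hL := gapL_mem hX hY hXI hYI hx
  have hR := gapR_mem hX hY hXI hYI hle hx
  refine ⟨⟨le_trans hL.1.1.1 ht.1.le, le_trans ht.2.le hR.1.1.2⟩, ?_⟩
  intro hKK
  have := gap_Ioo_inter hX hY hXI hYI hx
  rw [eq_empty_iff_forall_notMem] at this
  exact this t ⟨ht, hKK⟩

lemma gap_eq (hX : MeasurableSet X) (hY : MeasurableSet Y)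
    (hXI : X ⊆ Icc (0:ℝ) 1) (hYI : Y ⊆ Icc (0:ℝ) 1) (hle : 0 ≤ dd X Y 1) {x q : ℝ}
    (hx : x ∈ Icc 0 (tT X Y) \ KK X Y) (hq : q ∈ Ioo (gapL X Y x) (gapR X Y x)) :
    gapL X Y q = gapL X Y x ∧ gapR X Y q = gapR X Y x := by
  have hL := gapL_mem hX hY hXI hYI hx.1
  have hR := gapR_mem hX hY hXI hYI hle hx.1
  have hempty := gap_Ioo_inter hX hY hXI hYI hx.1
  rw [eq_empty_iff_forall_notMem] at hempty
  constructor
  · apply le_antisymm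
    · refine csSup_le (s := KK X Y ∩ Iic q) ⟨gapL X Y x, hL.1, hq.1.le⟩ ?_
      intro k hk
      by_contra hc
      push_neg at hc
      exact hempty k ⟨⟨hc, lt_of_le_of_lt hk.2 hq.2⟩, hk.1⟩
    · exact le_csSup (s := KK X Y ∩ Iic q) ⟨q, fun t ht => ht.2⟩ ⟨hL.1, hq.1.le⟩
  · apply le_antisymm
    · exact csInf_le (s := KK X Y ∩ Ici q) ⟨q, fun t ht => ht.2⟩ ⟨hR.1, hq.2.le⟩
    · refine le_csInf (s := KK X Y ∩ Ici q) ⟨gapR X Y x, hR.1, hq.2.le⟩ ?_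
      intro k hk
      by_contra hc
      push_neg at hc
      exact hempty k ⟨⟨lt_of_lt_of_le hq.1 hk.2, hc⟩, hk.1⟩

/-- The main bound on gaps: the moving set occupies at most half of the complement of K. -/
lemma gaps_bound (hX : MeasurableSet X) (hY : MeasurableSet Y)
    (hXI : X ⊆ Icc (0:ℝ) 1) (hYI : Y ⊆ Icc (0:ℝ) 1) (hd : Disjoint X Y)
    (hbad : Bad X Y) (hle : 0 ≤ dd X Y 1) :
    volume ((X ∪ Y) ∩ (Icc 0 (tT X Y) \ KK X Y)) ≤
      volume (Icc 0 (tT X Y) \ KK X Y) / 2 := by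
  classical
  set B := Icc 0 (tT X Y) \ KK X Y with hB
  set G : Set (Set ℝ) := (fun q : ℚ => Ioo (gapL X Y (q:ℝ)) (gapR X Y (q:ℝ))) ''
    {q : ℚ | (q:ℝ) ∈ B} with hG
  have hGcount : G.Countable := (Set.to_countable _).image _
  -- each member of G is of gap form
  have hGform : ∀ I ∈ G, ∃ x : ℝ, x ∈ B ∧ I = Ioo (gapL X Y x) (gapR X Y x) := by
    rintro I ⟨q, hq, rfl⟩
    exact ⟨(q:ℝ), hq, rfl⟩
  -- union of G is B
  have hGunion : ⋃₀ G = B := by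
    apply subset_antisymm
    · intro t ht
      obtain ⟨I, hI, htI⟩ := ht
      obtain ⟨x, hx, rfl⟩ := hGform I hI
      exact gap_subset hX hY hXI hYI hle hx.1 htI
    · intro x hx
      have hmem := mem_gap hX hY hXI hYI hle hx
      obtain ⟨q, hq1, hq2⟩ := exists_rat_btwn (lt_trans hmem.1 hmem.2)
      have hqIoo : (q:ℝ) ∈ Ioo (gapL X Y x) (gapR X Y x) := ⟨hq1, hq2⟩
      have hqB : (q:ℝ) ∈ B := gap_subset hX hY hXI hYI hle hx.1 hqIoo
      have heq := gap_eq hX hY hXI hYI hle hx hqIoo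
      exact ⟨Ioo (gapL X Y (q:ℝ)) (gapR X Y (q:ℝ)), ⟨q, hqB, rfl⟩, by
        rw [heq.1, heq.2]; exact hmem⟩
  -- pairwise disjoint
  have hGdisj : G.Pairwise (Disjoint · ·) := by
    intro I hI J hJ hIJ
    obtain ⟨x, hx, rfl⟩ := hGform I hI
    obtain ⟨y, hy, rfl⟩ := hGform J hJ
    rw [disjoint_left]
    intro z hzI hzJ
    apply hIJ
    have h1 := gap_eq hX hY hXI hYI hle hx hzI
    have h2 := gap_eq hX hY hXI hYI hle hy hzJ
    rw [← h1.1, ← h1.2, ← h2.1, ← h2.2]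
  -- each gap has the half bound
  have hhalf : ∀ I ∈ G, volume ((X ∪ Y) ∩ I) ≤ volume I / 2 := by
    rintro I hI
    obtain ⟨x, hx, rfl⟩ := hGform I hI
    set a := gapL X Y x with ha
    set b := gapR X Y x with hb0
    have hL := gapL_mem hX hY hXI hYI hx.1
    have hR := gapR_mem hX hY hXI hYI hle hx.1
    have hmemx := mem_gap hX hY hXI hYI hle hx
    have hab : a < b := lt_trans hmemx.1 hmemx.2
    have hT1 : tT X Y ≤ 1 := (tT_mem hX hY hXI hYI).1.2
    have h0a : 0 ≤ a := hL.1.1.1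
    have hb1 : b ≤ 1 := le_trans hR.1.1.2 hT1
    have hddeq : dd X Y b = dd X Y a :=
      gap_dd_eq hX hY hXI hYI hL.1 hR.1 hab
        (gap_Ioo_inter hX hY hXI hYI hx.1)
    have hcone := cone hX hY hXI hYI hbad h0a hab.le hb1
    rw [hddeq, sub_self, abs_zero] at hcone
    -- so Δg + Δh ≤ (b-a)/2
    have hsum : (volume (X ∩ Ioc a b)).toReal + (volume (Y ∩ Ioc a b)).toReal ≤ (b-a)/2 := by
      rw [← gg_diff hX hXI hab.le, ← gg_diff hY hYI hab.le]
      linarith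
    have hdisjXY : Disjoint (X ∩ Ioc a b) (Y ∩ Ioc a b) :=
      Disjoint.mono inter_subset_left inter_subset_left hd
    have hunion := measure_union (μ := volume) hdisjXY (hY.inter measurableSet_Ioc)
    rw [← union_inter_distrib_right] at hunion
    have hfin1 := vol_inter_ne_top hXI (Ioc a b)
    have hfin2 := vol_inter_ne_top hYI (Ioc a b)
    have hIoo : volume ((X ∪ Y) ∩ Ioo a b) ≤ volume ((X ∪ Y) ∩ Ioc a b) :=
      measure_mono (inter_subset_inter_right _ Ioo_subset_Ioc_self)
    calc volume ((X ∪ Y) ∩ Ioo a b) ≤ volume ((X ∪ Y) ∩ Ioc a b) := hIoo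
      _ = volume (X ∩ Ioc a b) + volume (Y ∩ Ioc a b) := hunion
      _ ≤ ENNReal.ofReal ((b-a)/2) := by
          rw [← ENNReal.ofReal_toReal hfin1, ← ENNReal.ofReal_toReal hfin2,
            ← ENNReal.ofReal_add ENNReal.toReal_nonneg ENNReal.toReal_nonneg]
          exact ENNReal.ofReal_le_ofReal hsum
      _ = volume (Ioo a b) / 2 := by
          rw [Real.volume_Ioo, ENNReal.ofReal_div_of_pos (by norm_num)]
          norm_num
  -- sum up
  have hmeas : ∀ I ∈ G, MeasurableSet I := by
    rintro I hI
    obtain ⟨x, hx, rfl⟩ := hGform I hI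
    exact measurableSet_Ioo
  rw [← hGunion, sUnion_eq_biUnion]
  have e1 : (X ∪ Y) ∩ ⋃ I ∈ G, I = ⋃ I ∈ G, (X ∪ Y) ∩ I := by
    rw [inter_iUnion₂]
  rw [e1]
  have hGdisj2 : G.PairwiseDisjoint (fun I => (X ∪ Y) ∩ I) := by
    intro I hI J hJ hIJ
    exact (hGdisj hI hJ hIJ).mono inter_subset_right inter_subset_right
  have hGdisj3 : G.PairwiseDisjoint (fun I => I) := fun I hI J hJ hIJ => hGdisj hI hJ hIJ
  rw [measure_biUnion hGcount hGdisj2 (fun I hI => (hX.union hY).inter (hmeas I hI)),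
    measure_biUnion hGcount hGdisj3 hmeas]
  calc ∑' (I : G), volume ((X ∪ Y) ∩ (I:Set ℝ)) ≤ ∑' (I : G), volume (I:Set ℝ) / 2 :=
        ENNReal.tsum_le_tsum (fun I => hhalf I I.2)
    _ = (∑' (I : G), volume (I:Set ℝ)) / 2 := by
        simp only [div_eq_mul_inv]
        exact ENNReal.tsum_mul_right

end Gaps

/-! ### Density helpers -/

lemma density_eventually {S : Set ℝ} {x : ℝ}
    (hx : Filter.Tendsto (fun r => volume (S ∩ Metric.closedBall x r) / volume (Metric.closedBall x r))
      (nhdsWithin 0 (Ioi 0)) (nhds 1))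
    {ε : ℝ} (hε : 0 < ε) (hε1 : ε < 1) :
    ∀ᶠ r in nhdsWithin 0 (Ioi (0:ℝ)),
      (1 - ε) * (2*r) < (volume (S ∩ Metric.closedBall x r)).toReal := by
  have h1 : ENNReal.ofReal (1 - ε) < 1 := by
    rw [← ENNReal.ofReal_one]
    exact ENNReal.ofReal_lt_ofReal_iff_of_nonneg (by linarith) |>.mpr (by linarith)
  have hev := hx.eventually (eventually_gt_nhds h1)
  filter_upwards [hev, self_mem_nhdsWithin] with r hr hr0
  have hr0' : (0:ℝ) < r := hr0
  have hcb : volume (Metric.closedBall x r) = ENNReal.ofReal (2*r) := Real.volume_closedBall x r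
  have hfin : volume (S ∩ Metric.closedBall x r) ≠ ⊤ := by
    refine ne_top_of_le_ne_top ?_ (measure_mono inter_subset_right)
    rw [hcb]; exact ENNReal.ofReal_ne_top
  have hne0 : volume (Metric.closedBall x r) ≠ 0 := by
    rw [hcb]; simp only [ne_eq, ENNReal.ofReal_eq_zero, not_le]; linarith
  have hnetop : volume (S ∩ Metric.closedBall x r) / volume (Metric.closedBall x r) ≠ ⊤ :=
    (ENNReal.div_lt_top hfin hne0).ne
  have hreal := (ENNReal.toReal_lt_toReal ENNReal.ofReal_ne_top hnetop).mpr hr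
  rw [ENNReal.toReal_ofReal (by linarith : (0:ℝ) ≤ 1 - ε), ENNReal.toReal_div, hcb,
    ENNReal.toReal_ofReal (by linarith : (0:ℝ) ≤ 2*r)] at hreal
  have h2r : (0:ℝ) < 2*r := by linarith
  calc (1-ε) * (2*r) < ((volume (S ∩ Metric.closedBall x r)).toReal / (2*r)) * (2*r) := by
        exact mul_lt_mul_of_pos_right hreal h2r
    _ = (volume (S ∩ Metric.closedBall x r)).toReal := by field_simp

lemma Ioc_left_subset_ball {x r : ℝ} (hr : 0 < r) : Ioc (x-r) x ⊆ Metric.closedBall x r := by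
  rw [Real.closedBall_eq_Icc]
  intro t ht
  exact ⟨ht.1.le, le_trans ht.2 (by linarith)⟩

lemma Ioc_right_subset_ball {x r : ℝ} (hr : 0 < r) : Ioc x (x+r) ⊆ Metric.closedBall x r := by
  rw [Real.closedBall_eq_Icc]
  intro t ht
  exact ⟨le_trans (by linarith) ht.1.le, ht.2⟩

lemma vol_sum_ball_le {X Y : Set ℝ} (hX : MeasurableSet X) (hY : MeasurableSet Y)
    (hXI : X ⊆ Icc (0:ℝ) 1) (hYI : Y ⊆ Icc (0:ℝ) 1) (hd : Disjoint X Y)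
    {x r : ℝ} (hr : 0 < r) :
    (volume (X ∩ Metric.closedBall x r)).toReal +
      (volume (Y ∩ Metric.closedBall x r)).toReal ≤ 2*r := by
  have hdisjXY : Disjoint (X ∩ Metric.closedBall x r) (Y ∩ Metric.closedBall x r) :=
    Disjoint.mono inter_subset_left inter_subset_left hd
  have hunion := measure_union (μ := volume) hdisjXY (hY.inter Metric.isClosed_closedBall.measurableSet)
  rw [← union_inter_distrib_right] at hunion
  have hle : volume ((X ∪ Y) ∩ Metric.closedBall x r) ≤ ENNReal.ofReal (2*r) := by
    rw [← Real.volume_closedBall x r]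
    exact measure_mono inter_subset_right
  rw [← ENNReal.toReal_add (vol_inter_ne_top hXI _) (vol_inter_ne_top hYI _), ← hunion]
  calc (volume ((X ∪ Y) ∩ Metric.closedBall x r)).toReal
      ≤ (ENNReal.ofReal (2*r)).toReal := ENNReal.toReal_mono ENNReal.ofReal_ne_top hle
    _ ≤ 2*r := by rw [ENNReal.toReal_ofReal (by linarith)]

lemma vol_Ioc_left_ge {Y : Set ℝ} (hYI : Y ⊆ Icc (0:ℝ) 1) {x r : ℝ} (hr : 0 < r) :
    (volume (Y ∩ Metric.closedBall x r)).toReal - r ≤ (volume (Y ∩ Ioc (x-r) x)).toReal := by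
  have hsub : Y ∩ Metric.closedBall x r ⊆ (Y ∩ Ioc (x-r) x) ∪ (Icc (x-r) (x-r) ∪ Ioc x (x+r)) := by
    rw [Real.closedBall_eq_Icc]
    rintro t ⟨htY, ht1, ht2⟩
    rcases le_or_gt t x with h | h
    · rcases eq_or_lt_of_le ht1 with h2 | h2
      · exact Or.inr (Or.inl ⟨h2.le, h2.ge⟩)
      · exact Or.inl ⟨htY, h2, h⟩
    · exact Or.inr (Or.inr ⟨h, ht2⟩)
  have hvol : volume (Y ∩ Metric.closedBall x r) ≤
      volume (Y ∩ Ioc (x-r) x) + ENNReal.ofReal r := by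
    calc volume (Y ∩ Metric.closedBall x r)
        ≤ volume ((Y ∩ Ioc (x-r) x) ∪ (Icc (x-r) (x-r) ∪ Ioc x (x+r))) := measure_mono hsub
      _ ≤ volume (Y ∩ Ioc (x-r) x) + volume (Icc (x-r) (x-r) ∪ Ioc x (x+r)) := measure_union_le _ _
      _ ≤ volume (Y ∩ Ioc (x-r) x) + (volume (Icc (x-r) (x-r)) + volume (Ioc x (x+r))) := by
          exact add_le_add le_rfl (measure_union_le _ _)
      _ = volume (Y ∩ Ioc (x-r) x) + ENNReal.ofReal r := by
          rw [Icc_self, Real.volume_singleton, Real.volume_Ioc]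
          norm_num
  have hfin : volume (Y ∩ Ioc (x-r) x) ≠ ⊤ := vol_inter_ne_top hYI _
  have := ENNReal.toReal_mono (by
      exact ENNReal.add_ne_top.mpr ⟨hfin, ENNReal.ofReal_ne_top⟩) hvol
  rw [ENNReal.toReal_add hfin ENNReal.ofReal_ne_top,
    ENNReal.toReal_ofReal hr.le] at this
  linarith

lemma vol_Ioc_right_ge {Y : Set ℝ} (hYI : Y ⊆ Icc (0:ℝ) 1) {x r : ℝ} (hr : 0 < r) :
    (volume (Y ∩ Metric.closedBall x r)).toReal - r ≤ (volume (Y ∩ Ioc x (x+r))).toReal := by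
  have hsub : Y ∩ Metric.closedBall x r ⊆ (Y ∩ Ioc x (x+r)) ∪ Icc (x-r) x := by
    rw [Real.closedBall_eq_Icc]
    rintro t ⟨htY, ht1, ht2⟩
    rcases le_or_gt t x with h | h
    · exact Or.inr ⟨ht1, h⟩
    · exact Or.inl ⟨htY, h, ht2⟩
  have hvol : volume (Y ∩ Metric.closedBall x r) ≤
      volume (Y ∩ Ioc x (x+r)) + ENNReal.ofReal r := by
    calc volume (Y ∩ Metric.closedBall x r)
        ≤ volume ((Y ∩ Ioc x (x+r)) ∪ Icc (x-r) x) := measure_mono hsub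
      _ ≤ volume (Y ∩ Ioc x (x+r)) + volume (Icc (x-r) x) := measure_union_le _ _
      _ = volume (Y ∩ Ioc x (x+r)) + ENNReal.ofReal r := by
          rw [Real.volume_Icc]
          norm_num
  have hfin : volume (Y ∩ Ioc x (x+r)) ≠ ⊤ := vol_inter_ne_top hYI _
  have := ENNReal.toReal_mono (by
      exact ENNReal.add_ne_top.mpr ⟨hfin, ENNReal.ofReal_ne_top⟩) hvol
  rw [ENNReal.toReal_add hfin ENNReal.ofReal_ne_top,
    ENNReal.toReal_ofReal hr.le] at this
  linarith

/-! ### Y is null on K -/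

lemma vol_Y_K_zero {X Y : Set ℝ} (hX : MeasurableSet X) (hY : MeasurableSet Y)
    (hXI : X ⊆ Icc (0:ℝ) 1) (hYI : Y ⊆ Icc (0:ℝ) 1) (hd : Disjoint X Y) :
    volume (Y ∩ KK X Y) = 0 := by
  rw [measure_eq_zero_iff_ae_notMem]
  filter_upwards [Besicovitch.ae_tendsto_measure_inter_div_of_measurableSet volume hY]
    with x hx hmem
  have hxY : x ∈ Y := hmem.1
  have hxK : x ∈ KK X Y := hmem.2
  rw [indicator_of_mem hxY, Pi.one_apply] at hx
  have hev := density_eventually hx (by norm_num : (0:ℝ) < 1/8) (by norm_num)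
  obtain ⟨r, hr, hr0⟩ := (hev.and self_mem_nhdsWithin).exists
  have hr0' : (0:ℝ) < r := hr0
  set yr := (volume (Y ∩ Metric.closedBall x r)).toReal with hyr
  have hyrge : (1 - 1/8) * (2*r) < yr := hr
  -- monotonicity of d up to the running max
  have hxT : x ≤ tT X Y := hxK.1.2
  have hmono : 0 ≤ dd X Y x - dd X Y (x - r) := by
    have h1 : dd X Y (x-r) ≤ MM X Y (x-r) := dd_le_MM hX hY hXI hYI (by linarith)
    have h2 : MM X Y (x-r) ≤ MM X Y x := MM_mono hX hY hXI hYI (by linarith)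
    rw [hxK.2]; linarith
  -- increments
  have hdd : dd X Y x - dd X Y (x - r) =
      (volume (X ∩ Ioc (x-r) x)).toReal - (volume (Y ∩ Ioc (x-r) x)).toReal := by
    simp only [dd]
    have e1 := gg_diff hX hXI (by linarith : x - r ≤ x)
    have e2 := gg_diff hY hYI (by linarith : x - r ≤ x)
    linarith
  have hYlow : yr - r ≤ (volume (Y ∩ Ioc (x-r) x)).toReal := vol_Ioc_left_ge hYI hr0'
  have hXup : (volume (X ∩ Ioc (x-r) x)).toReal ≤ 2*r - yr := by
    have h1 : (volume (X ∩ Ioc (x-r) x)).toReal ≤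
        (volume (X ∩ Metric.closedBall x r)).toReal :=
      ENNReal.toReal_mono (vol_inter_ne_top hXI _)
        (measure_mono (inter_subset_inter_right _ (Ioc_left_subset_ball hr0')))
    have h2 := vol_sum_ball_le hX hY hXI hYI hd (x := x) hr0'
    linarith
  rw [hdd] at hmono
  linarith

/-! ### X occupies at most d(1) of K -/

lemma MM_of_ge {X Y : Set ℝ} (hX : MeasurableSet X) (hY : MeasurableSet Y)
    (hXI : X ⊆ Icc (0:ℝ) 1) (hYI : Y ⊆ Icc (0:ℝ) 1) {t : ℝ} (ht : tT X Y ≤ t) :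
    MM X Y t = MM X Y (tT X Y) := by
  have h1 : min (max t 0) (tT X Y) = tT X Y := by
    rw [min_eq_right]; exact le_trans ht (le_max_left t 0)
  have h2 : min (max (tT X Y) 0) (tT X Y) = tT X Y := by
    rw [max_eq_left (tT_nonneg hX hY hXI hYI), min_self]
  rw [MM, MM, h1, h2]

lemma vol_X_K_le {X Y : Set ℝ} (hX : MeasurableSet X) (hY : MeasurableSet Y)
    (hXI : X ⊆ Icc (0:ℝ) 1) (hYI : Y ⊆ Icc (0:ℝ) 1) (hd : Disjoint X Y)
    (hle : 0 ≤ dd X Y 1) :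
    volume (X ∩ KK X Y) ≤ ENNReal.ofReal (dd X Y 1) := by
  set F : StieltjesFunction ℝ :=
    { toFun := MM X Y
      mono' := MM_mono hX hY hXI hYI
      right_continuous' := fun x =>
        ((MM_cont hX hY hXI hYI).continuousAt).continuousWithinAt } with hF
  have hFeq : ∀ t, F t = MM X Y t := fun t => rfl
  have hbot : Filter.Tendsto (F : ℝ → ℝ) Filter.atBot (nhds 0) := by
    apply Filter.Tendsto.congr' _ tendsto_const_nhds
    filter_upwards [Filter.eventually_le_atBot 0] with t ht
    exact (MM_of_nonpos hX hY hXI hYI ht).symm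
  have htop : Filter.Tendsto (F : ℝ → ℝ) Filter.atTop (nhds (dd X Y 1)) := by
    apply Filter.Tendsto.congr' _ tendsto_const_nhds
    filter_upwards [Filter.eventually_ge_atTop (tT X Y)] with t ht
    rw [hFeq, MM_of_ge hX hY hXI hYI ht, MM_tT hX hY hXI hYI hle]
  have huniv : F.measure univ = ENNReal.ofReal (dd X Y 1 - 0) := F.measure_univ hbot htop
  rw [sub_zero] at huniv
  -- a.e. lower bound for the RN derivative on X ∩ K
  have hae : ∀ᵐ x, x ∈ X ∩ KK X Y ∩ Iio (tT X Y) →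
      1 ≤ F.measure.rnDeriv volume x := by
    filter_upwards [F.ae_hasDerivAt,
      Besicovitch.ae_tendsto_measure_inter_div_of_measurableSet volume hX,
      Measure.rnDeriv_lt_top F.measure volume] with x hD hdens hfin hmem
    obtain ⟨⟨hxX, hxK⟩, hxT⟩ := hmem
    have hxTlt : x < tT X Y := hxT
    rw [indicator_of_mem hxX, Pi.one_apply] at hdens
    set L := (F.measure.rnDeriv volume x).toReal with hL
    have hL0 : 0 ≤ L := ENNReal.toReal_nonneg
    have hL1 : 1 ≤ L := by
      by_contra hc
      push_neg at hc
      set ε := (1 - L)/8 with hε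
      have hε0 : 0 < ε := by simp only [hε]; linarith
      have hε1 : ε < 1 := by simp only [hε]; linarith
      have hev := density_eventually hdens hε0 hε1
      -- slope along the right
      have hc1 : Filter.Tendsto (fun r : ℝ => x + r) (nhdsWithin 0 (Ioi 0))
          (nhdsWithin x {y | y ≠ x}) := by
        rw [tendsto_nhdsWithin_iff]
        constructor
        · have : Filter.Tendsto (fun r : ℝ => x + r) (nhds 0) (nhds x) := by
            simpa using (continuous_add_left x).tendsto (0:ℝ)
          exact this.mono_left nhdsWithin_le_nhds
        · filter_upwards [self_mem_nhdsWithin] with r hr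
          have hrpos : (0:ℝ) < r := hr
          intro hcon
          exact absurd hcon.le (by linarith)
      have hslope := (hasDerivAt_iff_tendsto_slope.mp hD).comp hc1
      have hslope_ev : ∀ᶠ r in nhdsWithin (0:ℝ) (Ioi 0),
          slope (F : ℝ → ℝ) x (x + r) < L + ε :=
        hslope.eventually_lt_const (by linarith)
      have hsmall : Ioo (0:ℝ) (tT X Y - x) ∈ nhdsWithin (0:ℝ) (Ioi 0) :=
        Ioo_mem_nhdsGT_of_mem ⟨le_refl 0, by linarith⟩
      obtain ⟨r, hr1, hr2, hr3⟩ := ((hev.and hslope_ev).and hsmall).exists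
      obtain ⟨hrden, hrslope⟩ := hr1
      have hr0 : (0:ℝ) < r := hr2
      have hrT : x + r ≤ tT X Y := by linarith [hr3]
      set xr := (volume (X ∩ Metric.closedBall x r)).toReal with hxr
      have hxrge : (1 - ε) * (2*r) < xr := hrden
      -- lower bound on the increment of MM
      have hMMge : (1 - 4*ε) * r < MM X Y (x + r) - MM X Y x := by
        have h1 : dd X Y (x + r) ≤ MM X Y (x + r) := dd_le_MM hX hY hXI hYI hrT
        have h2 : dd X Y x = MM X Y x := hxK.2
        have hdd : dd X Y (x+r) - dd X Y x =
            (volume (X ∩ Ioc x (x+r))).toReal - (volume (Y ∩ Ioc x (x+r))).toReal := by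
          simp only [dd]
          have e1 := gg_diff hX hXI (by linarith : x ≤ x + r)
          have e2 := gg_diff hY hYI (by linarith : x ≤ x + r)
          linarith
        have hXlow : xr - r ≤ (volume (X ∩ Ioc x (x+r))).toReal := vol_Ioc_right_ge hXI hr0
        have hYup : (volume (Y ∩ Ioc x (x+r))).toReal ≤ 2*r - xr := by
          have hh1 : (volume (Y ∩ Ioc x (x+r))).toReal ≤
              (volume (Y ∩ Metric.closedBall x r)).toReal :=
            ENNReal.toReal_mono (vol_inter_ne_top hYI _)
              (measure_mono (inter_subset_inter_right _ (Ioc_right_subset_ball hr0)))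
          have hh2 := vol_sum_ball_le hX hY hXI hYI hd (x := x) hr0
          linarith
        nlinarith
      have hslope_eq : slope (F : ℝ → ℝ) x (x + r) = (MM X Y (x+r) - MM X Y x) / r := by
        rw [slope_def_field, hFeq, hFeq]
        congr 1
        ring
      rw [hslope_eq] at hrslope
      have : (1 - 4*ε) < (MM X Y (x+r) - MM X Y x) / r := by
        rw [lt_div_iff₀ hr0]
        linarith
      have hfinal : (1 - 4*ε) < L + ε := lt_trans this hrslope
      simp only [hε] at hfinal
      linarith
    have hrd : F.measure.rnDeriv volume x = ENNReal.ofReal L :=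
      (ENNReal.ofReal_toReal hfin.ne).symm
    rw [hrd, ← ENNReal.ofReal_one]
    exact ENNReal.ofReal_le_ofReal hL1
  -- integrate
  set S := X ∩ KK X Y ∩ Iio (tT X Y) with hS
  have hSm : MeasurableSet S :=
    (hX.inter (KK_closed hX hY hXI hYI).measurableSet).inter measurableSet_Iio
  have h1 : volume S = ∫⁻ x in S, 1 ∂volume := (setLIntegral_one S).symm
  have h2 : ∫⁻ x in S, 1 ∂volume ≤ ∫⁻ x in S, F.measure.rnDeriv volume x ∂volume := by
    apply lintegral_mono_ae
    rw [ae_restrict_iff' hSm]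
    exact hae
  have h3 : ∫⁻ x in S, F.measure.rnDeriv volume x ∂volume =
      volume.withDensity (F.measure.rnDeriv volume) S := (withDensity_apply _ hSm).symm
  have h4 : volume.withDensity (F.measure.rnDeriv volume) S ≤ F.measure S :=
    Measure.le_iff'.1 (Measure.withDensity_rnDeriv_le F.measure volume) S
  have h5 : F.measure S ≤ F.measure univ := measure_mono (subset_univ S)
  have hsub : X ∩ KK X Y ⊆ S ∪ {tT X Y} := by
    rintro t ⟨htX, htK⟩
    rcases lt_or_eq_of_le htK.1.2 with h | h
    · exact Or.inl ⟨⟨htX, htK⟩, h⟩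
    · exact Or.inr (by simp [h])
  calc volume (X ∩ KK X Y) ≤ volume S + volume {tT X Y} :=
        le_trans (measure_mono hsub) (measure_union_le _ _)
    _ = volume S := by rw [Real.volume_singleton, add_zero]
    _ ≤ ENNReal.ofReal (dd X Y 1) := by
        rw [h1, ← huniv]
        exact le_trans h2 (le_trans (le_of_eq h3) (le_trans h4 h5))

/-! ### The core inequality -/

lemma core {X Y : Set ℝ} (hX : MeasurableSet X) (hY : MeasurableSet Y)
    (hXI : X ⊆ Icc (0:ℝ) 1) (hYI : Y ⊆ Icc (0:ℝ) 1) (hd : Disjoint X Y)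
    (hbad : Bad X Y) (hmle : (volume Y).toReal ≤ (volume X).toReal) :
    (volume X).toReal + 3 * (volume Y).toReal ≤ 1 := by
  set p := (volume X).toReal with hp
  set m := (volume Y).toReal with hm
  have hdd1 : dd X Y 1 = p - m := by
    simp only [dd, gg_one hXI, gg_one hYI]
    rfl
  have hle : 0 ≤ dd X Y 1 := by rw [hdd1]; linarith
  set T := tT X Y with hT
  have hT01 : T ∈ Icc (0:ℝ) 1 := (tT_mem hX hY hXI hYI).1
  have hdT : dd X Y T = dd X Y 1 := (tT_mem hX hY hXI hYI).2
  set K := KK X Y with hK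
  have hKsub : K ⊆ Icc 0 T := fun t ht => ht.1
  have hKm : MeasurableSet K := (KK_closed hX hY hXI hYI).measurableSet
  set B := Icc 0 T \ K with hB
  have hmvI : X ∪ Y ⊆ Icc (0:ℝ) 1 := union_subset hXI hYI
  -- finiteness facts
  have hfinK : volume K ≠ ⊤ := by
    refine ne_top_of_le_ne_top ?_ (measure_mono hKsub)
    rw [Real.volume_Icc]; exact ENNReal.ofReal_ne_top
  have hfinB : volume B ≠ ⊤ := by
    refine ne_top_of_le_ne_top ?_ (measure_mono diff_subset)
    rw [Real.volume_Icc]; exact ENNReal.ofReal_ne_top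
  -- real quantities
  set A := (volume (X ∩ K)).toReal with hA
  set a1 := (volume ((X ∪ Y) ∩ K)).toReal with ha1
  set a2 := (volume ((X ∪ Y) ∩ B)).toReal with ha2
  set k := (volume K).toReal with hk
  set b := (volume B).toReal with hb
  -- f2 : a1 ≤ A
  have f2 : a1 ≤ A := by
    have h1 : volume ((X ∪ Y) ∩ K) ≤ volume (X ∩ K) + volume (Y ∩ K) := by
      rw [union_inter_distrib_right]
      exact measure_union_le _ _
    rw [vol_Y_K_zero hX hY hXI hYI hd, add_zero] at h1
    exact ENNReal.toReal_mono (vol_inter_ne_top hXI _) h1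
  -- f3 : A ≤ p - m
  have f3 : A ≤ p - m := by
    have h1 := vol_X_K_le hX hY hXI hYI hd hle
    rw [hdd1] at h1
    calc A ≤ (ENNReal.ofReal (p - m)).toReal :=
          ENNReal.toReal_mono ENNReal.ofReal_ne_top h1
      _ ≤ p - m := by rw [ENNReal.toReal_ofReal (by linarith)]
  -- f4 : a2 ≤ b / 2
  have f4 : a2 ≤ b / 2 := by
    have h1 := gaps_bound hX hY hXI hYI hd hbad hle
    have h2 : (volume (Icc 0 T \ KK X Y) / 2).toReal = b / 2 := by
      rw [ENNReal.toReal_div]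
      norm_num
      rfl
    calc a2 ≤ (volume (Icc 0 T \ KK X Y) / 2).toReal := by
          refine ENNReal.toReal_mono ?_ h1
          rw [ne_eq, ENNReal.div_eq_top]
          push_neg
          exact ⟨fun _ => by norm_num, fun h => absurd h hfinB⟩
      _ = b / 2 := h2
  -- f5 : k + b = T
  have f5 : k + b = T := by
    have h1 := measure_inter_add_diff (μ := volume) (Icc (0:ℝ) T) hKm
    rw [inter_eq_right.2 hKsub] at h1
    have h2 : (volume (Icc (0:ℝ) T)).toReal = T := by
      rw [Real.volume_Icc, ENNReal.toReal_ofReal (by linarith [hT01.1] : (0:ℝ) ≤ T - 0)]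
      ring
    rw [← h2, ← h1, ENNReal.toReal_add hfinK hfinB]
  -- f6 : a1 ≤ k
  have f6 : a1 ≤ k :=
    ENNReal.toReal_mono hfinK (measure_mono inter_subset_right)
  -- f1 : increment over [0,T]
  have hT0 : (0:ℝ) ≤ T := hT01.1
  have f1 : (gg X T - gg X 0) + (gg Y T - gg Y 0) ≤ a1 + a2 := by
    have e1 := gg_diff hX hXI hT0
    have e2 := gg_diff hY hYI hT0
    have hdisjXY : Disjoint (X ∩ Ioc 0 T) (Y ∩ Ioc 0 T) :=
      Disjoint.mono inter_subset_left inter_subset_left hd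
    have hunion := measure_union (μ := volume) hdisjXY (hY.inter measurableSet_Ioc)
    rw [← union_inter_distrib_right] at hunion
    have hcover : (X ∪ Y) ∩ Ioc 0 T ⊆ ((X ∪ Y) ∩ K) ∪ ((X ∪ Y) ∩ B) := by
      rw [← inter_union_distrib_left]
      apply inter_subset_inter_right
      intro t ht
      by_cases htK : t ∈ K
      · exact Or.inl htK
      · exact Or.inr ⟨⟨ht.1.le, ht.2⟩, htK⟩
    have hmle2 : volume ((X ∪ Y) ∩ Ioc 0 T) ≤
        volume ((X ∪ Y) ∩ K) + volume ((X ∪ Y) ∩ B) :=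
      le_trans (measure_mono hcover) (measure_union_le _ _)
    have h3 : (volume ((X ∪ Y) ∩ Ioc 0 T)).toReal ≤ a1 + a2 := by
      rw [ha1, ha2, ← ENNReal.toReal_add (vol_inter_ne_top hmvI _) (vol_inter_ne_top hmvI _)]
      refine ENNReal.toReal_mono ?_ hmle2
      exact ENNReal.add_ne_top.mpr ⟨vol_inter_ne_top hmvI _, vol_inter_ne_top hmvI _⟩
    have h4 : (volume (X ∩ Ioc 0 T)).toReal + (volume (Y ∩ Ioc 0 T)).toReal =
        (volume ((X ∪ Y) ∩ Ioc 0 T)).toReal := by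
      rw [hunion, ENNReal.toReal_add (vol_inter_ne_top hXI _) (vol_inter_ne_top hYI _)]
    linarith
  -- tail inequality
  have htail : (gg X 1 - gg X T) + (gg Y 1 - gg Y T) - (1-T)/2 ≤ 0 := by
    have := cone hX hY hXI hYI hbad hT0 hT01.2 (le_refl 1)
    rwa [hdT, sub_self, abs_zero] at this
  -- totals
  have hXv : gg X 1 = p := gg_one hXI
  have hYv : gg Y 1 = m := gg_one hYI
  have hX0 : gg X 0 = 0 := gg_zero hXI
  have hY0 : gg Y 0 = 0 := gg_zero hYI
  -- combine
  linarith

end Stmt13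

open Stmt13 in
theorem stmt_13 (Ep Em : Set ℝ)
    (hEp : MeasurableSet Ep) (hEm : MeasurableSet Em)
    (hEpI : Ep ⊆ Set.Icc (0:ℝ) 1) (hEmI : Em ⊆ Set.Icc (0:ℝ) 1)
    (hdisj : Disjoint Ep Em)
    (hmin : min (volume Ep) (volume Em) > volume ((Set.Icc (0:ℝ) 1 \ Ep) \ Em) / 2) :
    ∃ a b : ℝ, a < b ∧ Set.Icc a b ⊆ Set.Icc (0:ℝ) 1 ∧
      min (volume (Set.Icc a b ∩ Ep)) (volume (Set.Icc a b ∩ Em)) ≥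
        volume (Set.Icc a b) / 4 := by
  by_contra hcon
  push_neg at hcon
  -- finiteness
  have hfinP : volume Ep ≠ ⊤ := by
    refine ne_top_of_le_ne_top ?_ (measure_mono hEpI)
    rw [Real.volume_Icc]; exact ENNReal.ofReal_ne_top
  have hfinM : volume Em ≠ ⊤ := by
    refine ne_top_of_le_ne_top ?_ (measure_mono hEmI)
    rw [Real.volume_Icc]; exact ENNReal.ofReal_ne_top
  set p := (volume Ep).toReal with hp
  set m := (volume Em).toReal with hm
  -- badness
  have hbadgen : ∀ a b : ℝ, 0 ≤ a → a < b → b ≤ 1 →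
      (volume (Ep ∩ Ioc a b)).toReal < (b-a)/4 ∨
      (volume (Em ∩ Ioc a b)).toReal < (b-a)/4 := by
    intro a b h0 hab h1
    have hsub : Icc a b ⊆ Icc (0:ℝ) 1 := Icc_subset_Icc h0 h1
    have hlt := hcon a b hab hsub
    have hIcc : volume (Icc a b) / 4 = ENNReal.ofReal ((b-a)/4) := by
      rw [Real.volume_Icc, ENNReal.ofReal_div_of_pos (by norm_num)]
      norm_num
    rw [hIcc] at hlt
    rcases min_lt_iff.mp hlt with h | h
    · left
      have h2 : volume (Ep ∩ Ioc a b) < ENNReal.ofReal ((b-a)/4) := by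
        refine lt_of_le_of_lt ?_ h
        rw [inter_comm]
        exact measure_mono (inter_subset_inter_left _ Ioc_subset_Icc_self)
      exact ENNReal.toReal_lt_of_lt_ofReal h2
    · right
      have h2 : volume (Em ∩ Ioc a b) < ENNReal.ofReal ((b-a)/4) := by
        refine lt_of_le_of_lt ?_ h
        rw [inter_comm]
        exact measure_mono (inter_subset_inter_left _ Ioc_subset_Icc_self)
      exact ENNReal.toReal_lt_of_lt_ofReal h2
  have hbadPM : Bad Ep Em := hbadgen
  have hbadMP : Bad Em Ep := fun a b h0 hab h1 => (hbadgen a b h0 hab h1).symm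
  -- the remainder set
  have hEmsub : Em ⊆ Icc (0:ℝ) 1 \ Ep := fun x hx =>
    ⟨hEmI hx, fun hxP => absurd (mem_inter hxP hx) (by rw [Set.disjoint_iff_inter_eq_empty] at hdisj; simp [hdisj])⟩
  have hr1 : volume (Icc (0:ℝ) 1 \ Ep) = 1 - volume Ep := by
    rw [measure_diff hEpI hEp.nullMeasurableSet hfinP, Real.volume_Icc]
    norm_num
  have hr2 : volume ((Icc (0:ℝ) 1 \ Ep) \ Em) = 1 - volume Ep - volume Em := by
    rw [measure_diff hEmsub hEm.nullMeasurableSet hfinM, hr1]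
  have hvol1 : volume Ep ≤ 1 := by
    have h := measure_mono (μ := volume) hEpI
    rwa [Real.volume_Icc, sub_zero, ENNReal.ofReal_one] at h
  have hvolM : volume Em ≤ 1 - volume Ep := by
    rw [← hr1]; exact measure_mono hEmsub
  have hrtoReal : (volume ((Icc (0:ℝ) 1 \ Ep) \ Em)).toReal = 1 - p - m := by
    rw [hr2, ENNReal.toReal_sub_of_le hvolM (by
        exact ne_top_of_le_ne_top (by simp) tsub_le_self),
      ENNReal.toReal_sub_of_le hvol1 (by simp)]
    simp
    rfl
  have hrfin : volume ((Icc (0:ℝ) 1 \ Ep) \ Em) ≠ ⊤ := by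
    rw [hr2]
    exact ne_top_of_le_ne_top (by simp) tsub_le_self
  rcases le_total (volume Em) (volume Ep) with hPM | hPM
  · -- m ≤ p
    have hmle : (volume Em).toReal ≤ (volume Ep).toReal :=
      ENNReal.toReal_mono hfinP hPM
    have hcore := core hEp hEm hEpI hEmI hdisj hbadPM hmle
    -- hmin gives m > (1-p-m)/2
    rw [min_eq_right hPM] at hmin
    have hminr : (1 - p - m)/2 < m := by
      have h1 : (volume ((Icc (0:ℝ) 1 \ Ep) \ Em) / 2).toReal < (volume Em).toReal := by
        refine ENNReal.toReal_strict_mono hfinM hmin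
      rw [ENNReal.toReal_div, hrtoReal] at h1
      norm_num at h1
      linarith
    linarith
  · -- p ≤ m
    have hmle : (volume Ep).toReal ≤ (volume Em).toReal :=
      ENNReal.toReal_mono hfinM hPM
    have hcore := core hEm hEp hEmI hEpI hdisj.symm hbadMP hmle
    rw [min_eq_left hPM] at hmin
    have hminr : (1 - p - m)/2 < p := by
      have h1 : (volume ((Icc (0:ℝ) 1 \ Ep) \ Em) / 2).toReal < (volume Ep).toReal := by
        refine ENNReal.toReal_strict_mono hfinP hmin
      rw [ENNReal.toReal_div, hrtoReal] at h1
      norm_num at h1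
      linarith
    linarith
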